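/- arXiv:2303.14533 — 4 statements merged into one kernel-verified Lean document; each statement's English description precedes it below -/
import Mathlib

section
/- Let A (N×Q), B (Q×Q), C (Q×J), D (N×Q) and E (Q×1) be constant real matrices, and suppose the matrix B + C·Y(x)ᵀ·D is invertible. Then for every i ∈ {1,…,N}, the function t ↦ (A · (B + C·Y(x with i-th coordinate replaced by t)ᵀ·D)⁻¹ · E)_i is differentiable at t = x_i, and its derivative equals the i-th entry of −Diag(A (B + C Y(x)ᵀ D)⁻¹ C (∇_X Y(x))ᵀ) ∘ (D (B + C Y(x)ᵀ D)⁻¹ E), where Diag(M) denotes the column vector of diagonal entries of a square matrix M and ∘ denotes the entrywise (Hadamard) product. -/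
open Matrix

attribute [local instance] Matrix.linftyOpNormedAddCommGroup Matrix.linftyOpNormedSpace
  Matrix.linftyOpNormedRing Matrix.linftyOpNormedAlgebra

private theorem single_term_aux {N J Q : ℕ} (X : Matrix (Fin N) (Fin J) ℝ)
    (Gm : Matrix (Fin N) (Fin Q) ℝ) (E : Fin Q → ℝ) (i i' : Fin N) (k : Fin J) :
    ((X * Matrix.single k i (1:ℝ) * Gm).mulVec E) i' = X i' k * (Gm.mulVec E) i := by
  simp only [Matrix.mul_apply, Matrix.mulVec, dotProduct, Matrix.single, of_apply,
    mul_ite, mul_one, mul_zero, ite_mul, zero_mul, Finset.sum_ite_eq, Finset.sum_ite_eq',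
    ite_and, Finset.mul_sum]
  refine Finset.sum_congr rfl fun q _ => ?_
  simp [Finset.sum_ite_eq]
  ring

private theorem transp_sb_aux {N J : ℕ} (i : Fin N) (k : Fin J) :
    (Matrix.single i k (1:ℝ))ᵀ = Matrix.single k i (1:ℝ) := by
  ext a b; simp [Matrix.single, and_comm]

private noncomputable def sandwichAux {N J Q : ℕ} (C : Matrix (Fin Q) (Fin J) ℝ)
    (D : Matrix (Fin N) (Fin Q) ℝ) :
    Matrix (Fin N) (Fin J) ℝ →ₗ[ℝ] Matrix (Fin Q) (Fin Q) ℝ where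
  toFun X := C * Xᵀ * D
  map_add' X Y := by simp [Matrix.transpose_add, Matrix.mul_add, Matrix.add_mul]
  map_smul' c X := by simp [Matrix.transpose_smul, Matrix.mul_smul, Matrix.smul_mul]

private noncomputable def evalLinAux {N Q : ℕ} (A : Matrix (Fin N) (Fin Q) ℝ) (E : Fin Q → ℝ)
    (i : Fin N) : Matrix (Fin Q) (Fin Q) ℝ →ₗ[ℝ] ℝ where
  toFun X := (A * X).mulVec E i
  map_add' X Y := by simp [Matrix.mul_add, Matrix.add_mulVec]
  map_smul' c X := by simp [Matrix.mul_smul, Matrix.smul_mulVec]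

/-- For `Y(x)` the `N × J` matrix with entries `g_{i,j}(x_i)`, constant
matrices `A (N×Q)`, `B (Q×Q)`, `C (Q×J)`, `D (N×Q)` and a constant column vector
`E ∈ ℝ^Q`, if `B + C Y(x)ᵀ D` is invertible then
`t ↦ (A · (B + C · Y(x with i-th coord replaced by t)ᵀ · D)⁻¹ · E)_i` is differentiable
at `t = x_i`, with derivative the `i`-th entry of
`−Diag(A (B + C Yᵀ D)⁻¹ C (∇_X Y)ᵀ) ∘ (D (B + C Yᵀ D)⁻¹ E)`. -/
theorem stmt_3 (N J Q : ℕ) (g : Fin N → Fin J → ℝ → ℝ)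
    (hg : ∀ i j, Differentiable ℝ (g i j))
    (A : Matrix (Fin N) (Fin Q) ℝ) (B : Matrix (Fin Q) (Fin Q) ℝ)
    (C : Matrix (Fin Q) (Fin J) ℝ) (D : Matrix (Fin N) (Fin Q) ℝ)
    (E : Fin Q → ℝ) (x : Fin N → ℝ)
    (hinv : IsUnit (B + C * (Matrix.of fun i' k => g i' k (x i'))ᵀ * D).det)
    (i : Fin N) :
    HasDerivAt
      (fun t : ℝ =>
        ((A * (B + C * (Matrix.of fun i' k => g i' k (Function.update x i t i'))ᵀ * D)⁻¹).mulVec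
          E) i)
      (-((A * (B + C * (Matrix.of fun i' k => g i' k (x i'))ᵀ * D)⁻¹ * C *
            (Matrix.of fun i' k => deriv (g i' k) (x i'))ᵀ) i i *
          ((D * (B + C * (Matrix.of fun i' k => g i' k (x i'))ᵀ * D)⁻¹).mulVec E) i))
      (x i) := by
  classical
  set Y0 : Matrix (Fin N) (Fin J) ℝ := Matrix.of fun i' k => g i' k (x i') with hY0
  set M0 : Matrix (Fin Q) (Fin Q) ℝ := B + C * Y0ᵀ * D with hM0
  set Yt : ℝ → Matrix (Fin N) (Fin J) ℝ :=
    fun t => Matrix.of fun i' k => g i' k (Function.update x i t i') with hYt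
  set Zd : Matrix (Fin N) (Fin J) ℝ :=
    ∑ k, deriv (g i k) (x i) • Matrix.single i k (1:ℝ) with hZd
  -- Step 1: derivative of Yt
  have hYtEq : ∀ t, Yt t =
      (Matrix.of fun i' k => if i' = i then 0 else g i' k (x i')) +
        ∑ k, g i k t • Matrix.single i k (1:ℝ) := by
    intro t
    ext a b
    by_cases h : a = i
    · subst h
      simp [Yt, Matrix.sum_apply, Matrix.single, Function.update_self, ite_and,
        Finset.sum_ite_eq, Finset.sum_ite_eq']
    · have h' : ¬ (i = a) := fun hh => h hh.symm
      simp [Yt, Matrix.sum_apply, Matrix.single, Function.update_of_ne h, h, h', ite_and]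
  have hY : HasDerivAt Yt Zd (x i) := by
    rw [show Yt = fun t => (Matrix.of fun i' k => if i' = i then 0 else g i' k (x i')) +
        ∑ k, g i k t • Matrix.single i k (1:ℝ) from funext hYtEq]
    refine HasDerivAt.const_add _ ?_
    exact HasDerivAt.fun_sum fun k _ => ((hg i k) (x i)).hasDerivAt.smul_const (Matrix.single i k (1:ℝ) : Matrix (Fin N) (Fin J) ℝ)
  -- Step 2: derivative of M
  have hM : HasDerivAt (fun t => B + C * (Yt t)ᵀ * D) (C * Zdᵀ * D) (x i) := by
    have := ((sandwichAux C D).toContinuousLinearMap.hasFDerivAt (x := Yt (x i))).comp_hasDerivAt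
      (x i) hY
    exact this.const_add B
  -- Step 3: M (x i) = M0
  have hMx : B + C * (Yt (x i))ᵀ * D = M0 := by
    simp [Yt, Function.update_eq_self, hM0, hY0]
  -- unit
  have hMu : IsUnit M0 := (Matrix.isUnit_iff_isUnit_det M0).mpr hinv
  obtain ⟨u, hu⟩ := hMu
  -- Step 4: derivative of inverse
  have hInv : HasDerivAt (fun t => (B + C * (Yt t)ᵀ * D)⁻¹)
      (-(M0⁻¹ * (C * Zdᵀ * D) * M0⁻¹)) (x i) := by
    have h1 : HasFDerivAt Ring.inverse
        (-ContinuousLinearMap.mulLeftRight ℝ (Matrix (Fin Q) (Fin Q) ℝ) ↑u⁻¹ ↑u⁻¹)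
        (B + C * (Yt (x i))ᵀ * D) := by
      rw [hMx, ← hu]; exact hasFDerivAt_ringInverse u
    have h2 := h1.comp_hasDerivAt (x i) hM
    have h3 : (↑u⁻¹ : Matrix (Fin Q) (Fin Q) ℝ) = M0⁻¹ := by
      rw [Matrix.coe_units_inv, hu]
    rw [Function.comp_def] at h2
    simp only [← Matrix.nonsing_inv_eq_ringInverse] at h2
    simp [h3, Function.comp] at h2
    exact h2
  -- Step 5: compose with evaluation
  have hFinal := ((evalLinAux A E i).toContinuousLinearMap.hasFDerivAt
    (x := (B + C * (Yt (x i))ᵀ * D)⁻¹)).comp_hasDerivAt (x i) hInv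
  -- identify function and derivative value
  have hval : evalLinAux A E i (-(M0⁻¹ * (C * Zdᵀ * D) * M0⁻¹)) =
      -((A * M0⁻¹ * C * (Matrix.of fun i' k => deriv (g i' k) (x i'))ᵀ) i i *
        ((D * M0⁻¹).mulVec E) i) := by
    have hrw : A * (M0⁻¹ * (C * Zdᵀ * D) * M0⁻¹) =
        ∑ k, deriv (g i k) (x i) • ((A * M0⁻¹ * C) * Matrix.single k i (1:ℝ) * (D * M0⁻¹)) := by
      rw [hZd]
      simp only [Matrix.transpose_sum, Matrix.transpose_smul, transp_sb_aux,
        Finset.sum_smul, Finset.smul_sum, Matrix.mul_sum, Matrix.sum_mul, Matrix.smul_mul,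
        Matrix.mul_smul]
      refine Finset.sum_congr rfl fun k _ => ?_
      congr 1
      simp only [Matrix.mul_assoc]
    show (A * (-(M0⁻¹ * (C * Zdᵀ * D) * M0⁻¹))).mulVec E i = _
    rw [Matrix.mul_neg, Matrix.neg_mulVec, hrw]
    simp only [Pi.neg_apply, neg_inj]
    rw [show (∑ k, deriv (g i k) (x i) •
        ((A * M0⁻¹ * C) * Matrix.single k i (1:ℝ) * (D * M0⁻¹))).mulVec E i =
        ∑ k, deriv (g i k) (x i) •
          (((A * M0⁻¹ * C) * Matrix.single k i (1:ℝ) * (D * M0⁻¹)).mulVec E i) by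
      simp only [Matrix.mulVec, dotProduct, Matrix.sum_apply, Matrix.smul_apply,
        smul_eq_mul, Finset.sum_mul, Finset.mul_sum]
      rw [Finset.sum_comm]
      exact Finset.sum_congr rfl fun k _ => Finset.sum_congr rfl fun q _ => by ring]
    simp only [single_term_aux, smul_eq_mul]
    rw [Matrix.mul_apply (M := A * M0⁻¹ * C), Finset.sum_mul]
    refine Finset.sum_congr rfl fun k _ => ?_
    simp [Matrix.transpose_apply, hY0]
    ring
  rw [← hval]
  exact hFinal
end

section
/- Let A (N×Q), B (Q×Q), C (Q×N), D (J×Q) and E (Q×1) be constant real matrices, and suppose the matrix B + C·Y(x)·D is invertible. Then for every i ∈ {1,…,N}, the function t ↦ (A · (B + C·Y(x with i-th coordinate replaced by t)·D)⁻¹ · E)_i is differentiable at t = x_i, and its derivative equals the i-th entry of −Diag(A (B + C Y(x) D)⁻¹ C) ∘ ((∇_X Y(x)) D (B + C Y(x) D)⁻¹ E), where Diag(M) denotes the column vector of diagonal entries of a square matrix M and ∘ denotes the entrywise (Hadamard) product. -/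
open Matrix

private lemma det_diffAt {n : ℕ} (f : ℝ → Matrix (Fin n) (Fin n) ℝ) (t : ℝ)
    (h : ∀ p q, DifferentiableAt ℝ (fun s => f s p q) t) :
    DifferentiableAt ℝ (fun s => (f s).det) t := by
  simp only [Matrix.det_apply']
  apply DifferentiableAt.fun_sum
  intro σ _
  apply DifferentiableAt.const_mul
  exact (HasDerivAt.fun_finsetProd (u := Finset.univ)
    (f := fun j s => f s (σ j) j)
    (f' := fun j => deriv (fun s => f s (σ j) j) t)
    (fun j _ => (h (σ j) j).hasDerivAt)).differentiableAt

/-- For `Y(x)` the `N × J` matrix with entries `g_{i,j}(x_i)`, constant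
matrices `A (N×Q)`, `B (Q×Q)`, `C (Q×N)`, `D (J×Q)` and a constant column vector
`E ∈ ℝ^Q`, if `B + C Y(x) D` is invertible then
`t ↦ (A · (B + C · Y(x with i-th coord replaced by t) · D)⁻¹ · E)_i` is differentiable
at `t = x_i`, with derivative the `i`-th entry of
`−Diag(A (B + C Y D)⁻¹ C) ∘ ((∇_X Y) D (B + C Y D)⁻¹ E)`. -/
theorem stmt_4 (N J Q : ℕ) (g : Fin N → Fin J → ℝ → ℝ)
    (hg : ∀ i j, Differentiable ℝ (g i j))
    (A : Matrix (Fin N) (Fin Q) ℝ) (B : Matrix (Fin Q) (Fin Q) ℝ)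
    (C : Matrix (Fin Q) (Fin N) ℝ) (D : Matrix (Fin J) (Fin Q) ℝ)
    (E : Fin Q → ℝ) (x : Fin N → ℝ)
    (hinv : IsUnit (B + C * (Matrix.of fun i' k => g i' k (x i')) * D).det)
    (i : Fin N) :
    HasDerivAt
      (fun t : ℝ =>
        ((A * (B + C * (Matrix.of fun i' k => g i' k (Function.update x i t i')) * D)⁻¹).mulVec
          E) i)
      (-((A * (B + C * (Matrix.of fun i' k => g i' k (x i')) * D)⁻¹ * C) i i *
          (((Matrix.of fun i' k => deriv (g i' k) (x i')) * D *
              (B + C * (Matrix.of fun i' k => g i' k (x i')) * D)⁻¹).mulVec E) i))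
      (x i) := by
  classical
  set Mt : ℝ → Matrix (Fin Q) (Fin Q) ℝ :=
    fun t => B + C * (Matrix.of fun i' k => g i' k (Function.update x i t i')) * D with hMt
  have hM0 : Mt (x i) = B + C * (Matrix.of fun i' k => g i' k (x i')) * D := by
    simp [hMt, Function.update_eq_self]
  set M0 : Matrix (Fin Q) (Fin Q) ℝ := B + C * (Matrix.of fun i' k => g i' k (x i')) * D with hM0def
  set Yd : Matrix (Fin N) (Fin J) ℝ := Matrix.of fun i' k => deriv (g i' k) (x i') with hYd
  set Y' : Matrix (Fin N) (Fin J) ℝ :=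
    Matrix.of (fun p k => if p = i then deriv (g i k) (x i) else 0) with hY'
  set M' : Matrix (Fin Q) (Fin Q) ℝ := C * Y' * D with hM'
  have hdet0 : (M0).det ≠ 0 := by
    simpa using hinv.ne_zero
  have hu : IsUnit M0.det := hinv
  -- Step A : entrywise derivative of Mt
  have hMd : ∀ p q, HasDerivAt (fun t => Mt t p q) (M' p q) (x i) := by
    intro p q
    have hfun : (fun t => Mt t p q) =
        fun t => B p q + ∑ k, (∑ i', C p i' * g i' k (if i' = i then t else x i')) * D k q := by
      funext t
      simp [hMt, Matrix.mul_apply, Function.update_apply, Matrix.add_apply]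
    have hval : M' p q = ∑ k, (∑ i', C p i' * Y' i' k) * D k q := by
      simp [hM', Matrix.mul_apply]
    rw [hfun, hval]
    apply HasDerivAt.const_add
    apply HasDerivAt.fun_sum
    intro k _
    apply HasDerivAt.mul_const
    apply HasDerivAt.fun_sum
    intro i' _
    rcases eq_or_ne i' i with rfl | hne
    · simpa [hY'] using ((hg i' k (x i')).hasDerivAt).const_mul (C p i')
    · simpa [hY', hne] using hasDerivAt_const (x i) (C p i' * g i' k (x i'))
  have hMdiff : ∀ p q, DifferentiableAt ℝ (fun t => Mt t p q) (x i) :=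
    fun p q => (hMd p q).differentiableAt
  -- Step B : entrywise differentiability of the inverse
  have hdet_diff : DifferentiableAt ℝ (fun t => (Mt t).det) (x i) := det_diffAt Mt (x i) hMdiff
  have hdet_ne : (fun t => (Mt t).det) (x i) ≠ 0 := by
    show (Mt (x i)).det ≠ 0
    rw [hM0]; exact hdet0
  have hadj : ∀ p q, DifferentiableAt ℝ (fun t => (Mt t).adjugate p q) (x i) := by
    intro p q
    simp only [Matrix.adjugate_apply]
    apply det_diffAt
    intro p' q'
    by_cases h : p' = q
    · simp only [Matrix.updateRow_apply, h, if_true]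
      exact differentiableAt_const _
    · simp only [Matrix.updateRow_apply, h, if_false]
      exact hMdiff p' q'
  have hFeq : ∀ t p q, (Mt t)⁻¹ p q = ((Mt t).det)⁻¹ * (Mt t).adjugate p q := by
    intro t p q
    rw [Matrix.inv_def]
    simp [Ring.inverse_eq_inv']
  have hFdiff : ∀ p q, DifferentiableAt ℝ (fun t => (Mt t)⁻¹ p q) (x i) := by
    intro p q
    simp only [hFeq]
    exact (hdet_diff.inv hdet_ne).mul (hadj p q)
  set F' : Matrix (Fin Q) (Fin Q) ℝ :=
    Matrix.of (fun p q => deriv (fun t => (Mt t)⁻¹ p q) (x i)) with hF'def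
  have hFd : ∀ p q, HasDerivAt (fun t => (Mt t)⁻¹ p q) (F' p q) (x i) :=
    fun p q => (hFdiff p q).hasDerivAt
  -- Step C : identify F'
  have hnb : ∀ᶠ t in nhds (x i), (Mt t).det ≠ 0 :=
    hdet_diff.continuousAt.eventually_ne hdet_ne
  have key : M' * M0⁻¹ + M0 * F' = 0 := by
    ext p q
    have h1 : (fun t => ∑ r, Mt t p r * (Mt t)⁻¹ r q) =ᶠ[nhds (x i)]
        (fun _ => (1 : Matrix (Fin Q) (Fin Q) ℝ) p q) := by
      filter_upwards [hnb] with t ht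
      have := Matrix.mul_nonsing_inv (Mt t) (isUnit_iff_ne_zero.mpr ht)
      calc ∑ r, Mt t p r * (Mt t)⁻¹ r q = (Mt t * (Mt t)⁻¹) p q := by
            rw [Matrix.mul_apply]
        _ = (1 : Matrix (Fin Q) (Fin Q) ℝ) p q := by rw [this]
    have h2 : HasDerivAt (fun t => ∑ r, Mt t p r * (Mt t)⁻¹ r q)
        (∑ r, (M' p r * (Mt (x i))⁻¹ r q + Mt (x i) p r * F' r q)) (x i) :=
      HasDerivAt.fun_sum fun r _ => (hMd p r).mul (hFd r q)
    have h3 : HasDerivAt (fun _ : ℝ => (1 : Matrix (Fin Q) (Fin Q) ℝ) p q)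
        (∑ r, (M' p r * (Mt (x i))⁻¹ r q + Mt (x i) p r * F' r q)) (x i) :=
      h2.congr_of_eventuallyEq h1.symm
    have h4 := h3.unique (hasDerivAt_const _ _)
    rw [hM0] at h4
    simpa [Matrix.add_apply, Matrix.mul_apply, Finset.sum_add_distrib] using h4
  have hF' : F' = -(M0⁻¹ * M' * M0⁻¹) := by
    have h5 : M0 * F' = -(M' * M0⁻¹) := eq_neg_of_add_eq_zero_left (by rwa [add_comm] at key)
    calc F' = (M0⁻¹ * M0) * F' := by rw [Matrix.nonsing_inv_mul _ hu, Matrix.one_mul]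
      _ = M0⁻¹ * (M0 * F') := by rw [Matrix.mul_assoc]
      _ = M0⁻¹ * -(M' * M0⁻¹) := by rw [h5]
      _ = -(M0⁻¹ * M' * M0⁻¹) := by simp [hM', Matrix.mul_assoc]
  -- Step D : derivative of the target function
  have hmain : HasDerivAt (fun t => ((A * (Mt t)⁻¹).mulVec E) i)
      (∑ q, (∑ p, A i p * F' p q) * E q) (x i) := by
    have hfun : (fun t => ((A * (Mt t)⁻¹).mulVec E) i) =
        fun t => ∑ q, (∑ p, A i p * (Mt t)⁻¹ p q) * E q := by
      funext t
      simp [Matrix.mulVec, dotProduct, Matrix.mul_apply]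
    rw [hfun]
    exact HasDerivAt.fun_sum fun q _ =>
      ((HasDerivAt.fun_sum fun p _ => (hFd p q).const_mul (A i p)).mul_const (E q))
  have hval : (∑ q, (∑ p, A i p * F' p q) * E q) =
      -((A * M0⁻¹ * C) i i * ((Yd * D * M0⁻¹).mulVec E) i) := by
    have h0 : (∑ q, (∑ p, A i p * F' p q) * E q) = ((A * F').mulVec E) i := by
      simp [Matrix.mulVec, dotProduct, Matrix.mul_apply]
    rw [h0, hF']
    have hassoc : A * -(M0⁻¹ * M' * M0⁻¹) = -((A * M0⁻¹ * C * Y') * (D * M0⁻¹)) := by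
      rw [hM']
      rw [Matrix.mul_neg]
      congr 1
      simp only [Matrix.mul_assoc]
    rw [hassoc]
    have hrow : ∀ k, (A * M0⁻¹ * C * Y') i k = (A * M0⁻¹ * C) i i * Yd i k := by
      intro k
      rw [Matrix.mul_apply]
      simp [hY', hYd, mul_ite, mul_zero, Finset.sum_ite_eq']
    have h1 : ∀ q, ((A * M0⁻¹ * C * Y') * (D * M0⁻¹)) i q =
        (A * M0⁻¹ * C) i i * (Yd * D * M0⁻¹) i q := by
      intro q
      calc ((A * M0⁻¹ * C * Y') * (D * M0⁻¹)) i q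
          = ∑ k, (A * M0⁻¹ * C * Y') i k * (D * M0⁻¹) k q := Matrix.mul_apply
        _ = ∑ k, (A * M0⁻¹ * C) i i * (Yd i k * (D * M0⁻¹) k q) := by
            simp [hrow, mul_assoc]
        _ = (A * M0⁻¹ * C) i i * ∑ k, Yd i k * (D * M0⁻¹) k q := by rw [Finset.mul_sum]
        _ = (A * M0⁻¹ * C) i i * (Yd * (D * M0⁻¹)) i q := by
            congr 1
        _ = (A * M0⁻¹ * C) i i * (Yd * D * M0⁻¹) i q := by rw [Matrix.mul_assoc Yd D M0⁻¹]
    have h2 : ((A * M0⁻¹ * C * Y') * (D * M0⁻¹)).mulVec E i =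
        (A * M0⁻¹ * C) i i * ((Yd * D * M0⁻¹).mulVec E) i := by
      simp only [Matrix.mulVec, dotProduct, h1, Finset.mul_sum, mul_assoc]
    rw [Matrix.neg_mulVec, Pi.neg_apply, h2]
  rw [← hval]
  exact hmain
end

section
/- Fix an asset i, constants χ_i > 0, R_f ∈ ℝ, γ > 0, a > 0, a symmetric positive-definite N×N real matrix Σ, and constants m_j (j ≠ i). For p > 0 let μ(p) ∈ ℝ^N have i-th coordinate μ_i(p) = χ_i/p − R_f and j-th coordinate m_j for j ≠ i, and let the CARA portfolio weight be w(p) = (1/(γa))·Σ⁻¹·μ(p). If w_i(p) > 0, then the shares-demanded function s(q) = a·w_i(q)/q has price elasticity of demand −p·s'(p)/s(p) = 1 + (Σ⁻¹)_{ii}·(μ_i(p) + R_f)/(γ·a·w_i(p)) = 1 + (Σ⁻¹)_{ii}·(μ_i(p) + R_f)/((Σ⁻¹ μ(p))_i); in particular the elasticity does not depend on the risk aversion γ or the assets under management a. -/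
/-- CARA demand `w(p) = (1/(γa))·Σ⁻¹·μ(p)` for asset `i` with exogenous
expected payoff `χᵢ > 0`, so `μ_i(p) = χᵢ/p − R_f` while the other coordinates of `μ`
are constants `m_j`. If `p > 0` and `w_i(p) > 0`, the shares demanded
`s(q) = a·w_i(q)/q` have price elasticity
`−p·s'(p)/s(p) = 1 + (Σ⁻¹)_{ii}·(μ_i(p)+R_f)/(γ·a·w_i(p))
             = 1 + (Σ⁻¹)_{ii}·(μ_i(p)+R_f)/((Σ⁻¹μ(p))_i)`;
in particular the elasticity does not depend on `γ` or `a`. -/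
theorem stmt_8 (N : ℕ) (i : Fin N) (χ Rf γ a p : ℝ)
    (hχ : 0 < χ) (hγ : 0 < γ) (ha : 0 < a) (hp : 0 < p)
    (S : Matrix (Fin N) (Fin N) ℝ) (hS : S.PosDef)
    (m : Fin N → ℝ)
    (μ : ℝ → Fin N → ℝ)
    (hμ : ∀ q, μ q = fun j => if j = i then χ / q - Rf else m j)
    (w : ℝ → Fin N → ℝ)
    (hw : ∀ q, w q = (1 / (γ * a)) • S⁻¹.mulVec (μ q))
    (hwp : 0 < w p i) :
    -p * deriv (fun q => a * w q i / q) p / (a * w p i / p) =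
      1 + S⁻¹ i i * (μ p i + Rf) / (γ * a * w p i) ∧
    1 + S⁻¹ i i * (μ p i + Rf) / (γ * a * w p i) =
      1 + S⁻¹ i i * (μ p i + Rf) / (S⁻¹.mulVec (μ p) i) := by
  have hγa : γ * a ≠ 0 := by positivity
  have hp0 : p ≠ 0 := ne_of_gt hp
  set K := S⁻¹ i i with hK
  set C := ∑ j ∈ Finset.univ.erase i, S⁻¹ i j * m j with hC
  have hmv : ∀ q, S⁻¹.mulVec (μ q) i = K * (χ / q - Rf) + C := by
    intro q
    rw [hμ]
    simp only [Matrix.mulVec, dotProduct]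
    rw [← Finset.add_sum_erase _ _ (Finset.mem_univ i)]
    simp only [if_pos rfl]
    congr 1
    exact Finset.sum_congr rfl fun j hj => by
      rw [if_neg (Finset.ne_of_mem_erase hj)]
  have hwi : ∀ q, w q i = (1 / (γ * a)) * (K * (χ / q - Rf) + C) := by
    intro q; rw [hw, Pi.smul_apply, smul_eq_mul, hmv]
  set D := C - K * Rf with hD
  have key : (fun q => a * w q i / q) =ᶠ[nhds p]
      (fun q => (K * χ / γ) / q ^ 2 + (D / γ) / q) := by
    filter_upwards [isOpen_Ioi.mem_nhds (Set.mem_Ioi.mpr hp)] with q hq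
    have hq0 : (q : ℝ) ≠ 0 := ne_of_gt hq
    rw [hwi]
    field_simp
    ring
  have h1 : HasDerivAt (fun q : ℝ => (K * χ / γ) / q ^ 2 + (D / γ) / q)
      ((K * χ / γ) * (-(↑2 * p ^ 1) / (p ^ 2) ^ 2) + (D / γ) * (-(p ^ 2)⁻¹)) p := by
    have ha1 : HasDerivAt (fun q : ℝ => (K * χ / γ) * (q ^ 2)⁻¹)
        ((K * χ / γ) * (-(↑2 * p ^ 1) / (p ^ 2) ^ 2)) p :=
      ((hasDerivAt_pow 2 p).inv (pow_ne_zero 2 hp0)).const_mul _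
    have ha2 : HasDerivAt (fun q : ℝ => (D / γ) * q⁻¹)
        ((D / γ) * (-(p ^ 2)⁻¹)) p := (hasDerivAt_inv hp0).const_mul _
    exact (ha1.add ha2).congr_of_eventuallyEq (Filter.Eventually.of_forall fun q => by simp only [Pi.add_apply]; ring)
  have hderiv : deriv (fun q => a * w q i / q) p =
      (K * χ / γ) * (-(↑2 * p ^ 1) / (p ^ 2) ^ 2) + (D / γ) * (-(p ^ 2)⁻¹) := by
    rw [key.deriv_eq, h1.deriv]
  have hW : 0 < γ * a * w p i := by positivity
  have hWval : γ * a * w p i = K * χ / p + D := by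
    rw [hwi]; field_simp; ring
  have h2 : K * χ / p + D ≠ 0 := by rw [← hWval]; exact ne_of_gt hW
  have hμpi : μ p i = χ / p - Rf := by rw [hμ]; simp
  have hs : a * w p i / p = ((K * χ / p + D) / γ) / p := by
    rw [hwi]; field_simp; ring
  have main : -p * ((K*χ/γ)*(-(↑2*p^1)/(p^2)^2) + (D/γ)*(-(p^2)⁻¹)) / (((K*χ/p+D)/γ)/p)
      = 1 + (K*χ/p)/(K*χ/p+D) := by
    have h3 : K*χ + D*p ≠ 0 := by
      intro h; apply h2; field_simp; linear_combination h
    field_simp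
    rw [mul_comm p D]; field_simp; ring
  have hKχ : K * (μ p i + Rf) = K * χ / p := by rw [hμpi]; ring
  constructor
  · rw [hderiv, hs, main, hKχ, hWval]
  · rw [hmv, hWval, hμpi, hD]; ring_nf
end

section
/- Let Z be an N×K real matrix, Φ, Ψ ∈ ℝ^K, ζ > 0 and γ > 0. Define μ = Z·Φ ∈ ℝ^N, Γ = Z·Ψ ∈ ℝ^N, and Σ = Γ·Γᵀ + ζ·I_N. Then Σ is invertible, and the CARA portfolio weight vector satisfies (1/γ)·Σ⁻¹·μ = Z·β, where β = (1/(γ·ζ))·(Φ − κ·Ψ) ∈ ℝ^K and κ = (Γᵀ·μ)/(Γᵀ·Γ + ζ) is a scalar. Hence, under the one-factor covariance structure with means and factor loadings linear in the asset characteristics Z, optimal portfolio weights are linear in the asset's own characteristics. -/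
open Matrix

lemma vmv_mulVec {N : ℕ} (a b x : Fin N → ℝ) :
    (vecMulVec a b).mulVec x = (b ⬝ᵥ x) • a := by
  ext i
  simp only [vecMulVec_apply, mulVec, dotProduct, Pi.smul_apply, smul_eq_mul, Finset.sum_mul]
  exact Finset.sum_congr rfl fun k _ => by ring

lemma vmv_mul_vmv {N : ℕ} (a b c d : Fin N → ℝ) :
    (vecMulVec a b) * (vecMulVec c d) = (b ⬝ᵥ c) • vecMulVec a d := by
  ext i j
  simp only [vecMulVec_apply, Matrix.mul_apply, Pi.smul_apply, Matrix.smul_apply, dotProduct,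
    Finset.sum_mul, smul_eq_mul]
  exact Finset.sum_congr rfl fun k _ => by ring

/-- Under the one-factor structure `μ = Z·Φ`, `Γ = Z·Ψ`,
`Σ = Γ·Γᵀ + ζ·I_N` (`ζ > 0`), the matrix `Σ` is invertible and the CARA weights
satisfy `(1/γ)·Σ⁻¹·μ = Z·β` with `β = (1/(γζ))·(Φ − κ·Ψ)` and scalar
`κ = (Γᵀμ)/(ΓᵀΓ + ζ)`: optimal weights are linear in the characteristics `Z`. -/
theorem stmt_17 (N K : ℕ) (Z : Matrix (Fin N) (Fin K) ℝ)
    (Φv Ψv : Fin K → ℝ) (ζ γ : ℝ) (hζ : 0 < ζ) (hγ : 0 < γ) :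
    IsUnit (Matrix.vecMulVec (Z.mulVec Ψv) (Z.mulVec Ψv) +
        ζ • (1 : Matrix (Fin N) (Fin N) ℝ)).det ∧
    (1 / γ) • (Matrix.vecMulVec (Z.mulVec Ψv) (Z.mulVec Ψv) +
        ζ • (1 : Matrix (Fin N) (Fin N) ℝ))⁻¹.mulVec (Z.mulVec Φv) =
      Z.mulVec (fun k =>
        (1 / (γ * ζ)) *
          (Φv k -
            ((Z.mulVec Ψv ⬝ᵥ Z.mulVec Φv) / (Z.mulVec Ψv ⬝ᵥ Z.mulVec Ψv + ζ)) * Ψv k)) := by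
  set Γ := Z.mulVec Ψv with hΓ
  set μ := Z.mulVec Φv with hμ
  set V := vecMulVec Γ Γ with hV
  set Sg := V + ζ • (1 : Matrix (Fin N) (Fin N) ℝ) with hSg
  set t : ℝ := Γ ⬝ᵥ Γ with ht
  have ht0 : 0 ≤ t := Finset.sum_nonneg fun i _ => mul_self_nonneg _
  set s : ℝ := t + ζ with hs
  have hs0 : 0 < s := by positivity
  have hVV : V * V = t • V := by rw [hV, vmv_mul_vmv, ht]
  have hSgV : Sg * V = s • V := by
    rw [hSg, Matrix.add_mul, hVV, Matrix.smul_mul, Matrix.one_mul, hs, add_smul]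
  set A := (ζ⁻¹ : ℝ) • ((1 : Matrix (Fin N) (Fin N) ℝ) - s⁻¹ • V) with hA
  have hmul : Sg * A = 1 := by
    rw [hA, Matrix.mul_smul, Matrix.mul_sub, Matrix.mul_one, Matrix.mul_smul, hSgV,
      smul_smul, inv_mul_cancel₀ (ne_of_gt hs0), one_smul, hSg, add_sub_cancel_left,
      smul_smul, inv_mul_cancel₀ (ne_of_gt hζ), one_smul]
  have hunitSg : IsUnit Sg := ⟨⟨Sg, A, hmul, mul_eq_one_comm.mp hmul⟩, rfl⟩
  have hunit : IsUnit Sg.det := (Matrix.isUnit_iff_isUnit_det _).mp hunitSg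
  refine ⟨hunit, ?_⟩
  set κ : ℝ := (Γ ⬝ᵥ μ) / s with hκ
  set w : Fin N → ℝ := ζ⁻¹ • (μ - κ • Γ) with hw
  have hdw : Γ ⬝ᵥ w = κ := by
    rw [hw, dotProduct_smul, dotProduct_sub, dotProduct_smul, ← ht, hκ, hs]
    have hζ' : ζ ≠ 0 := ne_of_gt hζ
    have hs' : t + ζ ≠ 0 := by positivity
    simp only [smul_eq_mul]
    field_simp
    ring
  have hSgw : Sg.mulVec w = μ := by
    rw [hSg, Matrix.add_mulVec, hV, vmv_mulVec, hdw, Matrix.smul_mulVec,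
      Matrix.one_mulVec, hw, smul_smul, mul_inv_cancel₀ (ne_of_gt hζ), one_smul]
    ext i
    simp only [Pi.add_apply, Pi.smul_apply, Pi.sub_apply, smul_eq_mul]
    ring
  have hinv : Sg⁻¹.mulVec μ = w := by
    rw [← hSgw, Matrix.mulVec_mulVec, Matrix.nonsing_inv_mul _ hunit, Matrix.one_mulVec]
  rw [hinv]
  ext i
  rw [hw, hμ, hΓ]
  simp only [mulVec, dotProduct, Pi.smul_apply, Pi.sub_apply, smul_eq_mul,
    Finset.mul_sum, ← Finset.sum_sub_distrib]
  refine Finset.sum_congr rfl fun k _ => ?_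
  have hζ' : ζ ≠ 0 := ne_of_gt hζ
  have hγ' : γ ≠ 0 := ne_of_gt hγ
  field_simp
end
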